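/- arXiv:1406.7397 — 5 statements merged into one kernel-verified Lean document; each statement's English description precedes it below -/
import Mathlib

section
/- Let μ > 0 and let r : ℝ → ℝ³ be a twice differentiable curve with r(t) ≠ 0 for all t that satisfies Newton's inverse-square equation r''(t) = −μ · r(t)/‖r(t)‖³. Then the Laplace–Runge–Lenz vector A(t) = r'(t) × (r(t) × r'(t)) − μ · r(t)/‖r(t)‖ is constant in t. -/
/-- The cross product of two vectors in `ℝ³` (Euclidean space). -/
noncomputable def cross3 (a b : EuclideanSpace ℝ (Fin 3)) : EuclideanSpace ℝ (Fin 3) :=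
  (WithLp.equiv 2 (Fin 3 → ℝ)).symm
    ![a 1 * b 2 - a 2 * b 1, a 2 * b 0 - a 0 * b 2, a 0 * b 1 - a 1 * b 0]

lemma key (μ : ℝ) (x0 x1 x2 v0 v1 v2 n : ℝ → ℝ) (t : ℝ)
    (hn : n t ≠ 0)
    (hnsq : n t ^ 2 = x0 t ^ 2 + x1 t ^ 2 + x2 t ^ 2)
    (hx0 : HasDerivAt x0 (v0 t) t) (hx1 : HasDerivAt x1 (v1 t) t) (hx2 : HasDerivAt x2 (v2 t) t)
    (hv0 : HasDerivAt v0 (-(μ / n t ^ 3) * x0 t) t)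
    (hv1 : HasDerivAt v1 (-(μ / n t ^ 3) * x1 t) t)
    (hv2 : HasDerivAt v2 (-(μ / n t ^ 3) * x2 t) t)
    (hn' : HasDerivAt n ((x0 t * v0 t + x1 t * v1 t + x2 t * v2 t) / n t) t) :
    HasDerivAt (fun s => v1 s * (x0 s * v1 s - x1 s * v0 s)
      - v2 s * (x2 s * v0 s - x0 s * v2 s) - μ / n s * x0 s) 0 t := by
  have H := ((hv1.mul ((hx0.mul hv1).sub (hx1.mul hv0))).sub
      (hv2.mul ((hx2.mul hv0).sub (hx0.mul hv2)))).sub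
      (((hasDerivAt_const t μ).div hn' hn).mul hx0)
  refine H.congr_deriv ?_
  simp only [Pi.mul_apply, Pi.sub_apply, Pi.div_apply]
  field_simp
  linear_combination (-(μ * v0 t)) * hnsq

/-- For a twice differentiable solution of Newton's inverse-square equation
`r'' = -μ r / ‖r‖³`, the Laplace–Runge–Lenz vector
`A = r' × (r × r') - μ r / ‖r‖` is constant. -/
theorem laplace_runge_lenz_constant
    (μ : ℝ) (hμ : 0 < μ) (r : ℝ → EuclideanSpace ℝ (Fin 3))
    (hr : Differentiable ℝ r) (hr' : Differentiable ℝ (deriv r))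
    (hne : ∀ t, r t ≠ 0)
    (hnewton : ∀ t, deriv (deriv r) t = -(μ / ‖r t‖ ^ 3) • r t) :
    ∀ t s : ℝ,
      cross3 (deriv r t) (cross3 (r t) (deriv r t)) - (μ / ‖r t‖) • r t =
      cross3 (deriv r s) (cross3 (r s) (deriv r s)) - (μ / ‖r s‖) • r s := by
  have hn : ∀ t, ‖r t‖ ≠ 0 := fun t => norm_ne_zero_iff.mpr (hne t)
  have hx : ∀ (i : Fin 3) (t : ℝ), HasDerivAt (fun s => r s i) (deriv r t i) t := by
    intro i t
    have := (EuclideanSpace.proj i).hasFDerivAt.comp_hasDerivAt t (hr t).hasDerivAt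
    simp at this; exact this
  have hv : ∀ (i : Fin 3) (t : ℝ),
      HasDerivAt (fun s => deriv r s i) (-(μ / ‖r t‖ ^ 3) * r t i) t := by
    intro i t
    have := (EuclideanSpace.proj i).hasFDerivAt.comp_hasDerivAt t (hr' t).hasDerivAt
    simp [hnewton t] at this; rw [neg_mul]; exact this
  have hnsq : ∀ t, ‖r t‖ ^ 2 = r t 0 ^ 2 + r t 1 ^ 2 + r t 2 ^ 2 := by
    intro t
    rw [EuclideanSpace.norm_eq, Real.sq_sqrt (by positivity)]
    simp [Fin.sum_univ_three, Real.norm_eq_abs, sq_abs]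
  have hn' : ∀ t, HasDerivAt (fun s => ‖r s‖)
      ((r t 0 * deriv r t 0 + r t 1 * deriv r t 1 + r t 2 * deriv r t 2) / ‖r t‖) t := by
    intro t
    have hsq : HasDerivAt (fun s => r s 0 ^ 2 + r s 1 ^ 2 + r s 2 ^ 2)
        (2 * r t 0 ^ 1 * deriv r t 0 + 2 * r t 1 ^ 1 * deriv r t 1
          + 2 * r t 2 ^ 1 * deriv r t 2) t :=
      (((hx 0 t).pow 2).add ((hx 1 t).pow 2)).add ((hx 2 t).pow 2)
    have hne2 : r t 0 ^ 2 + r t 1 ^ 2 + r t 2 ^ 2 ≠ 0 := by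
      rw [← hnsq t]; exact pow_ne_zero 2 (hn t)
    have H := hsq.sqrt hne2
    have heq : (fun s => Real.sqrt (r s 0 ^ 2 + r s 1 ^ 2 + r s 2 ^ 2)) = fun s => ‖r s‖ := by
      funext s
      rw [show r s 0 ^ 2 + r s 1 ^ 2 + r s 2 ^ 2 = ‖r s‖ ^ 2 from (hnsq s).symm]
      exact Real.sqrt_sq (norm_nonneg _)
    rw [heq] at H
    have hsr : Real.sqrt (r t 0 ^ 2 + r t 1 ^ 2 + r t 2 ^ 2) = ‖r t‖ := by
      rw [← hnsq t]; exact Real.sqrt_sq (norm_nonneg _)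
    convert H using 1
    rw [hsr]
    field_simp
  -- coordinate LRL components
  have k0 : ∀ t : ℝ, HasDerivAt (fun s => deriv r s 1 * (r s 0 * deriv r s 1 - r s 1 * deriv r s 0)
      - deriv r s 2 * (r s 2 * deriv r s 0 - r s 0 * deriv r s 2) - μ / ‖r s‖ * r s 0) 0 t :=
    fun t => key μ (fun s => r s 0) (fun s => r s 1) (fun s => r s 2)
      (fun s => deriv r s 0) (fun s => deriv r s 1) (fun s => deriv r s 2)
      (fun s => ‖r s‖) t (hn t) (hnsq t)
      (hx 0 t) (hx 1 t) (hx 2 t) (hv 0 t) (hv 1 t) (hv 2 t) (hn' t)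
  have k1 : ∀ t : ℝ, HasDerivAt (fun s => deriv r s 2 * (r s 1 * deriv r s 2 - r s 2 * deriv r s 1)
      - deriv r s 0 * (r s 0 * deriv r s 1 - r s 1 * deriv r s 0) - μ / ‖r s‖ * r s 1) 0 t :=
    fun t => key μ (fun s => r s 1) (fun s => r s 2) (fun s => r s 0)
      (fun s => deriv r s 1) (fun s => deriv r s 2) (fun s => deriv r s 0)
      (fun s => ‖r s‖) t (hn t) (by rw [hnsq t]; ring)
      (hx 1 t) (hx 2 t) (hx 0 t) (hv 1 t) (hv 2 t) (hv 0 t) (by convert hn' t using 1; ring)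
  have k2 : ∀ t : ℝ, HasDerivAt (fun s => deriv r s 0 * (r s 2 * deriv r s 0 - r s 0 * deriv r s 2)
      - deriv r s 1 * (r s 1 * deriv r s 2 - r s 2 * deriv r s 1) - μ / ‖r s‖ * r s 2) 0 t :=
    fun t => key μ (fun s => r s 2) (fun s => r s 0) (fun s => r s 1)
      (fun s => deriv r s 2) (fun s => deriv r s 0) (fun s => deriv r s 1)
      (fun s => ‖r s‖) t (hn t) (by rw [hnsq t]; ring)
      (hx 2 t) (hx 0 t) (hx 1 t) (hv 2 t) (hv 0 t) (hv 1 t) (by convert hn' t using 1; ring)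
  have c0 := is_const_of_deriv_eq_zero (fun t => ((k0 t).differentiableAt : _))
    (fun t => (k0 t).deriv)
  have c1 := is_const_of_deriv_eq_zero (fun t => ((k1 t).differentiableAt : _))
    (fun t => (k1 t).deriv)
  have c2 := is_const_of_deriv_eq_zero (fun t => ((k2 t).differentiableAt : _))
    (fun t => (k2 t).deriv)
  intro t s
  have hext : ∀ (a b : EuclideanSpace ℝ (Fin 3)), (∀ i, a i = b i) → a = b := fun a b h => PiLp.ext h
  apply hext
  intro i
  fin_cases i <;>
    simp only [cross3, WithLp.equiv_symm_apply, PiLp.toLp_apply, PiLp.sub_apply, PiLp.smul_apply,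
      Fin.zero_eta, Fin.mk_one, Fin.reduceFinMk,
      Matrix.cons_val_zero, Matrix.cons_val_one, Matrix.head_cons, Matrix.cons_val_two,
      Matrix.tail_cons, smul_eq_mul, Fin.isValue]
  · have := c0 t s; linarith [this]
  · have := c1 t s; linarith [this]
  · have := c2 t s; linarith [this]
end

section
/- Let m₁, m₂, m₃ > 0 be real numbers. Then the quintic polynomial p(z) = (m₁+m₂)z⁵ + (3m₁+2m₂)z⁴ + (3m₁+m₂)z³ − (m₂+3m₃)z² − (2m₂+3m₃)z − (m₂+m₃) has exactly one positive real root. -/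
/-- Euler's quintic for the collinear three-body configuration has exactly
one positive real root. -/
theorem euler_quintic_unique_positive_root
    (m₁ m₂ m₃ : ℝ) (h₁ : 0 < m₁) (h₂ : 0 < m₂) (h₃ : 0 < m₃) :
    ∃! z : ℝ, 0 < z ∧
      (m₁ + m₂) * z ^ 5 + (3 * m₁ + 2 * m₂) * z ^ 4 + (3 * m₁ + m₂) * z ^ 3
        - (m₂ + 3 * m₃) * z ^ 2 - (2 * m₂ + 3 * m₃) * z - (m₂ + m₃) = 0 := by
  set f : ℝ → ℝ := fun z => (m₁ + m₂) * z ^ 5 + (3 * m₁ + 2 * m₂) * z ^ 4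
      + (3 * m₁ + m₂) * z ^ 3 - (m₂ + 3 * m₃) * z ^ 2 - (2 * m₂ + 3 * m₃) * z
      - (m₂ + m₃) with hf
  have hm : (0:ℝ) < m₁ + m₂ := by linarith
  -- uniqueness core: f cannot vanish at two distinct positive points
  have key : ∀ a b : ℝ, 0 < a → 0 < b → a < b → f a = 0 → f b = 0 → False := by
    intro a b ha hb hab hfa hfb
    have hid : a ^ 3 * f b - b ^ 3 * f a
        = (m₁ + m₂) * (a ^ 3 * b ^ 3) * (b ^ 2 - a ^ 2)
          + (3 * m₁ + 2 * m₂) * (a ^ 3 * b ^ 3) * (b - a)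
          + (m₂ + 3 * m₃) * (a ^ 2 * b ^ 2) * (b - a)
          + (2 * m₂ + 3 * m₃) * (a * b) * (b ^ 2 - a ^ 2)
          + (m₂ + m₃) * (b ^ 3 - a ^ 3) := by
      simp only [hf]; ring
    rw [hfa, hfb] at hid
    have h1 : 0 < a * b := mul_pos ha hb
    have h2 : 0 < a ^ 2 * b ^ 2 := by positivity
    have h3 : 0 < a ^ 3 * b ^ 3 := by positivity
    have h4 : 0 < b - a := by linarith
    have h5 : 0 < b ^ 2 - a ^ 2 := by nlinarith
    have h6 : 0 < b ^ 3 - a ^ 3 := by nlinarith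
    nlinarith [mul_pos h3 h5, mul_pos h3 h4, mul_pos h2 h4, mul_pos h1 h5]
  -- existence via IVT
  have hc : Continuous f := by fun_prop
  set T : ℝ := max 1 ((4 * m₂ + 7 * m₃) / (m₁ + m₂)) with hT
  have hT1 : (1:ℝ) ≤ T := le_max_left _ _
  have hTS : 4 * m₂ + 7 * m₃ ≤ (m₁ + m₂) * T := by
    have := le_max_right 1 ((4 * m₂ + 7 * m₃) / (m₁ + m₂))
    calc 4 * m₂ + 7 * m₃ = (4 * m₂ + 7 * m₃) / (m₁ + m₂) * (m₁ + m₂) := by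
          field_simp
      _ ≤ T * (m₁ + m₂) := mul_le_mul_of_nonneg_right this (by linarith)
      _ = (m₁ + m₂) * T := by ring
  have hfT : 0 ≤ f T := by
    have hT0 : (0:ℝ) < T := lt_of_lt_of_le one_pos hT1
    have hT4 : (0:ℝ) < T ^ 4 := by positivity
    have e1 : T ^ 2 ≤ T ^ 4 := pow_le_pow_right₀ hT1 (by norm_num)
    have e2 : T ^ 1 ≤ T ^ 4 := pow_le_pow_right₀ hT1 (by norm_num)
    have e3 : (1:ℝ) ≤ T ^ 4 := one_le_pow₀ hT1
    have step : T ^ 4 * ((m₁ + m₂) * T - (4 * m₂ + 7 * m₃)) ≤ f T := by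
      simp only [hf]
      nlinarith [mul_pos hT4 hT0, pow_pos hT0 3]
    nlinarith [mul_nonneg hT4.le (by linarith : (0:ℝ) ≤ (m₁ + m₂) * T - (4 * m₂ + 7 * m₃))]
  have hf0 : f 0 < 0 := by simp only [hf]; norm_num; linarith
  obtain ⟨z, hzmem, hz0⟩ :=
    intermediate_value_Icc (by linarith : (0:ℝ) ≤ T) hc.continuousOn ⟨hf0.le, hfT⟩
  have hzpos : 0 < z := by
    rcases eq_or_lt_of_le hzmem.1 with h | h
    · exfalso; rw [← h] at hz0; linarith
    · exact h
  refine ⟨z, ⟨hzpos, hz0⟩, ?_⟩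
  rintro y ⟨hy, hfy⟩
  by_contra hne
  rcases lt_or_gt_of_ne hne with h | h
  · exact key y z hy hzpos h hfy hz0
  · exact key z y hzpos hy h hz0 hfy
end

section
/- Let G > 0 and m₁, m₂, m₃ > 0, and let p₁, p₂, p₃ ∈ ℂ be pairwise distinct points with m₁p₁ + m₂p₂ + m₃p₃ = 0 and |p_j − p_k| = L for all j ≠ k, where L > 0 (an equilateral configuration with center of mass at the origin). Let ω ∈ ℝ satisfy ω² = G·(m₁+m₂+m₃)/L³, and define q_k(t) = exp(i·ω·t)·p_k for k = 1,2,3. Then each q_k is twice differentiable and satisfies Newton's equations of the three-body problem: q_k''(t) = Σ_{j≠k} G·m_j·(q_j(t) − q_k(t))/|q_j(t) − q_k(t)|³ for all t. -/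
/-- Lagrange's equilateral solution of the three-body problem: if three
masses form an equilateral triangle of side `L` with center of mass at the
origin and rotate rigidly with angular velocity `ω` where
`ω² = G(m₁+m₂+m₃)/L³`, then each body satisfies Newton's equations. -/
theorem lagrange_equilateral_solution
    (G : ℝ) (hG : 0 < G) (m : Fin 3 → ℝ) (hm : ∀ k, 0 < m k)
    (p : Fin 3 → ℂ) (hdist : ∀ j k, j ≠ k → p j ≠ p k)
    (hcom : (m 0 : ℂ) * p 0 + (m 1 : ℂ) * p 1 + (m 2 : ℂ) * p 2 = 0)
    (L : ℝ) (hL : 0 < L)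
    (hside : ∀ j k, j ≠ k → ‖p j - p k‖ = L)
    (ω : ℝ) (hω : ω ^ 2 = G * (m 0 + m 1 + m 2) / L ^ 3)
    (q : Fin 3 → ℝ → ℂ)
    (hq : ∀ k t, q k t = Complex.exp (Complex.I * (ω * t)) * p k) :
    ∀ k, Differentiable ℝ (q k) ∧ Differentiable ℝ (deriv (q k)) ∧
      ∀ t, deriv (deriv (q k)) t =
        ∑ j ∈ Finset.univ.erase k,
          ((G * m j : ℝ) : ℂ) * (q j t - q k t) /
            ((‖q j t - q k t‖ : ℝ) : ℂ) ^ 3 := by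
  intro k
  set c : ℂ := Complex.I * ω with hc
  have hqfun : q k = fun t : ℝ => Complex.exp (c * t) * p k := by
    funext t; rw [hq]; push_cast; simp only [hc, mul_assoc]
  have hexp : ∀ t : ℝ, HasDerivAt (fun s : ℝ => Complex.exp (c * s))
      (c * Complex.exp (c * t)) t := by
    intro t
    have h := (((hasDerivAt_id (t : ℂ)).const_mul c).cexp).comp_ofReal
    simpa [mul_comm] using h
  have hd1 : ∀ t : ℝ, HasDerivAt (q k) (c * Complex.exp (c * t) * p k) t := by
    intro t; rw [hqfun]; exact (hexp t).mul_const _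
  have hderiv1 : deriv (q k) = fun t : ℝ => c * Complex.exp (c * t) * p k := by
    funext t; exact (hd1 t).deriv
  have hd2 : ∀ t : ℝ, HasDerivAt (deriv (q k)) (c * c * Complex.exp (c * t) * p k) t := by
    intro t; rw [hderiv1]
    simpa [mul_assoc, mul_comm, mul_left_comm] using ((hexp t).const_mul c).mul_const (p k)
  refine ⟨fun t => (hd1 t).differentiableAt, fun t => (hd2 t).differentiableAt, fun t => ?_⟩
  rw [(hd2 t).deriv]
  have habs : ∀ z : ℂ, ‖Complex.exp (c * t) * z‖ = ‖z‖ := by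
    intro z
    simp [map_mul, hc, Complex.norm_exp]
  have hq' : ∀ j, q j t = Complex.exp (c * t) * p j := by
    intro j; rw [hq]; push_cast; simp only [hc, mul_assoc]
  have hLne : (L : ℂ) ≠ 0 := by exact_mod_cast hL.ne'
  have hωC : (ω : ℂ) ^ 2 = G * (m 0 + m 1 + m 2) / L ^ 3 := by
    exact_mod_cast hω
  have hc2 : c * c = -((G : ℂ) * (m 0 + m 1 + m 2) / L ^ 3) := by
    rw [← hωC, hc]
    have : Complex.I ^ 2 = -1 := Complex.I_sq
    linear_combination (ω : ℂ) ^ 2 * this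
  have hterm : ∀ j, j ≠ k →
      ((G * m j : ℝ) : ℂ) * (q j t - q k t) /
        ((‖q j t - q k t‖ : ℝ) : ℂ) ^ 3
      = ((G : ℂ) * m j) * (Complex.exp (c * t) * (p j - p k)) / (L : ℂ) ^ 3 := by
    intro j hjk
    have h1 : q j t - q k t = Complex.exp (c * t) * (p j - p k) := by
      rw [hq' j, hq' k]; ring
    rw [h1, habs, hside j k hjk]
    push_cast; ring
  have hself : ∀ i : Fin 3, ((G * m i : ℝ) : ℂ) * (q i t - q i t) /
      ((‖q i t - q i t‖ : ℝ) : ℂ) ^ 3 = 0 := by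
    intro i; simp
  rw [Finset.sum_erase_eq_sub (Finset.mem_univ k), hself k, sub_zero, Fin.sum_univ_three]
  have hk3 : k = 0 ∨ k = 1 ∨ k = 2 := by fin_cases k <;> decide
  rcases hk3 with hk | hk | hk <;> subst hk
  · rw [hterm 1 (by decide), hterm 2 (by decide), hself 0]
    linear_combination (Complex.exp (c * t) * p 0) * hc2
      - ((G : ℂ) / (L : ℂ) ^ 3 * Complex.exp (c * t)) * hcom
  · rw [hterm 0 (by decide), hterm 2 (by decide), hself 1]
    linear_combination (Complex.exp (c * t) * p 1) * hc2
      - ((G : ℂ) / (L : ℂ) ^ 3 * Complex.exp (c * t)) * hcom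
  · rw [hterm 0 (by decide), hterm 1 (by decide), hself 2]
    linear_combination (Complex.exp (c * t) * p 2) * hc2
      - ((G : ℂ) / (L : ℂ) ^ 3 * Complex.exp (c * t)) * hcom
end

section
/- Let G > 0, m > 0, M > 0, d > 0, and let ω ∈ ℝ satisfy ω² = G·(M + m/4)/d³. Define q₁(t) = exp(i·ω·t)·d, q₂(t) = 0, and q₃(t) = −exp(i·ω·t)·d in ℂ, corresponding to masses m, M, m respectively. Then these curves satisfy Newton's equations of the three-body problem: for each k, q_k''(t) = Σ_{j≠k} G·m_j·(q_j(t) − q_k(t))/|q_j(t) − q_k(t)|³ for all t. -/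
open Complex

private lemma hasDerivAt_rot (ω : ℝ) (t : ℝ) :
    HasDerivAt (fun s : ℝ => Complex.exp (Complex.I * (ω * s)))
      (Complex.I * ω * Complex.exp (Complex.I * (ω * t))) t := by
  have h0 : HasDerivAt (fun s : ℝ => (s : ℂ)) 1 t := by
    simpa using (hasDerivAt_id t).ofReal_comp
  have h1 : HasDerivAt (fun s : ℝ => Complex.I * (ω * (s : ℂ)))
      (Complex.I * ω) t := by
    have := h0.const_mul (Complex.I * (ω : ℂ))
    simpa [mul_assoc] using this
  simpa [mul_comm] using h1.cexp

private lemma deriv2_rot (ω d : ℝ) (t : ℝ) :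
    deriv (deriv (fun s : ℝ => Complex.exp (Complex.I * (ω * s)) * (d : ℂ))) t
      = -((ω : ℂ) ^ 2) * Complex.exp (Complex.I * (ω * t)) * d := by
  have hd1 : deriv (fun s : ℝ => Complex.exp (Complex.I * (ω * s)) * (d : ℂ))
      = fun s : ℝ => Complex.I * ω * Complex.exp (Complex.I * (ω * s)) * d := by
    funext s
    exact ((hasDerivAt_rot ω s).mul_const (d : ℂ)).deriv
  rw [hd1]
  have h2 : HasDerivAt (fun s : ℝ => Complex.I * ω * Complex.exp (Complex.I * (ω * s)) * d)
      (Complex.I * ω * (Complex.I * ω * Complex.exp (Complex.I * (ω * t))) * d) t := by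
    exact (((hasDerivAt_rot ω t).const_mul (Complex.I * (ω : ℂ))).mul_const (d : ℂ))
  rw [h2.deriv]
  have : Complex.I * Complex.I = -1 := Complex.I_mul_I
  ring_nf
  rw [Complex.I_sq]
  ring

/-- Euler's symmetric collinear solution of the three-body problem: two equal
masses `m` at distance `d` on either side of a central mass `M`, rotating
rigidly with `ω² = G(M + m/4)/d³`, satisfy Newton's equations. -/
theorem euler_collinear_solution
    (G m M d ω : ℝ) (hG : 0 < G) (hm : 0 < m) (hM : 0 < M) (hd : 0 < d)
    (hω : ω ^ 2 = G * (M + m / 4) / d ^ 3)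
    (q₁ q₂ q₃ : ℝ → ℂ)
    (h₁ : ∀ t, q₁ t = Complex.exp (Complex.I * (ω * t)) * (d : ℂ))
    (h₂ : ∀ t, q₂ t = 0)
    (h₃ : ∀ t, q₃ t = -(Complex.exp (Complex.I * (ω * t)) * (d : ℂ))) :
    ∀ t : ℝ,
      (deriv (deriv q₁) t =
        ((G * M : ℝ) : ℂ) * (q₂ t - q₁ t) /
          ((‖q₂ t - q₁ t‖ : ℝ) : ℂ) ^ 3 +
        ((G * m : ℝ) : ℂ) * (q₃ t - q₁ t) /
          ((‖q₃ t - q₁ t‖ : ℝ) : ℂ) ^ 3) ∧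
      (deriv (deriv q₂) t =
        ((G * m : ℝ) : ℂ) * (q₁ t - q₂ t) /
          ((‖q₁ t - q₂ t‖ : ℝ) : ℂ) ^ 3 +
        ((G * m : ℝ) : ℂ) * (q₃ t - q₂ t) /
          ((‖q₃ t - q₂ t‖ : ℝ) : ℂ) ^ 3) ∧
      (deriv (deriv q₃) t =
        ((G * m : ℝ) : ℂ) * (q₁ t - q₃ t) /
          ((‖q₁ t - q₃ t‖ : ℝ) : ℂ) ^ 3 +
        ((G * M : ℝ) : ℂ) * (q₂ t - q₃ t) /
          ((‖q₂ t - q₃ t‖ : ℝ) : ℂ) ^ 3) := by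
  intro t
  have hq₁ : q₁ = fun s : ℝ => Complex.exp (Complex.I * (ω * s)) * (d : ℂ) := funext h₁
  have hq₂ : q₂ = fun _ : ℝ => (0 : ℂ) := funext h₂
  have hq₃ : q₃ = fun s : ℝ => -(Complex.exp (Complex.I * (ω * s)) * (d : ℂ)) := funext h₃
  set e : ℂ := Complex.exp (Complex.I * (ω * t)) with he
  have habs_e : ‖e‖ = 1 := by
    rw [he, Complex.norm_exp]
    simp [Complex.mul_re]
  have hdne : (d : ℝ) ≠ 0 := hd.ne'
  have habs1 : ‖0 - e * d‖ = d := by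
    simp [habs_e, abs_of_pos hd]
  have habs2 : ‖-(e * (d:ℂ)) - e * d‖ = 2 * d := by
    have : -(e * (d:ℂ)) - e * d = -(2 * (e * d)) := by ring
    rw [this]
    simp [habs_e, abs_of_pos hd]
  have habs3 : ‖e * (d:ℂ) - 0‖ = d := by
    simp [habs_e, abs_of_pos hd]
  have habs4 : ‖-(e * (d:ℂ)) - 0‖ = d := by
    simp [habs_e, abs_of_pos hd]
  have habs5 : ‖e * (d:ℂ) - -(e * d)‖ = 2 * d := by
    have : e * (d:ℂ) - -(e * d) = 2 * (e * d) := by ring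
    rw [this]
    simp [habs_e, abs_of_pos hd]
  have habs6 : ‖(0:ℂ) - -(e * d)‖ = d := by
    simp [habs_e, abs_of_pos hd]
  have hD1 : deriv (deriv q₁) t = -((ω:ℂ)^2) * e * d := by
    rw [hq₁]; exact deriv2_rot ω d t
  have hD2 : deriv (deriv q₂) t = 0 := by
    rw [hq₂]; simp
  have hD3 : deriv (deriv q₃) t = (ω:ℂ)^2 * e * d := by
    rw [hq₃]
    have hneg : (fun s : ℝ => -(Complex.exp (Complex.I * (ω * s)) * (d : ℂ)))
        = fun s : ℝ => Complex.exp (Complex.I * (ω * s)) * ((-d : ℝ) : ℂ) := by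
      funext s; push_cast; ring
    rw [hneg, deriv2_rot ω (-d) t]
    push_cast; ring
  have hωC : ((ω:ℂ))^2 = (G:ℂ) * ((M:ℂ) + (m:ℂ)/4) / (d:ℂ)^3 := by
    have h := congrArg (fun x : ℝ => (x:ℂ)) hω
    push_cast at h; simpa using h
  have hdC : (d:ℂ) ≠ 0 := by exact_mod_cast hdne
  refine ⟨?_, ?_, ?_⟩
  · rw [hD1, h₁, h₂, h₃, habs1, habs2]
    push_cast
    rw [hωC]
    field_simp
    simp only [he, mul_assoc]
    ring
  · rw [hD2, h₁, h₂, h₃, habs3, habs4]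
    push_cast
    field_simp
    ring
  · rw [hD3, h₁, h₂, h₃, habs5, habs6]
    push_cast
    rw [hωC]
    field_simp
    simp only [he, mul_assoc]
    ring
end

section
/- Let u, v, w be unit vectors in ℝ³ such that v is not parallel to u and w is not parallel to u, and let P v = v − ⟨v,u⟩·u and P w = w − ⟨w,u⟩·u denote the components of v and w orthogonal to u. Then cos(∠(v,w)) = cos(∠(u,v))·cos(∠(u,w)) + sin(∠(u,v))·sin(∠(u,w))·cos(∠(P v, P w)), where ∠(a,b) denotes the angle between nonzero vectors a and b. (This is the spherical law of cosines for the spherical triangle with vertices u, v, w on the unit sphere.) -/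
open scoped RealInnerProductSpace
open InnerProductGeometry

/-- The spherical law of cosines for the spherical triangle with vertices
`u`, `v`, `w` on the unit sphere of `ℝ³`:
`cos(∠(v,w)) = cos(∠(u,v))·cos(∠(u,w)) + sin(∠(u,v))·sin(∠(u,w))·cos(∠(Pv,Pw))`,
where `Pv`, `Pw` are the components of `v`, `w` orthogonal to `u`. -/
theorem spherical_law_of_cosines
    (u v w : EuclideanSpace ℝ (Fin 3))
    (hu : ‖u‖ = 1) (hv : ‖v‖ = 1) (hw : ‖w‖ = 1)
    (hvu : ∀ c : ℝ, v ≠ c • u) (hwu : ∀ c : ℝ, w ≠ c • u)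
    (Pv Pw : EuclideanSpace ℝ (Fin 3))
    (hPv : Pv = v - ⟪v, u⟫ • u) (hPw : Pw = w - ⟪w, u⟫ • u) :
    Real.cos (angle v w) =
      Real.cos (angle u v) * Real.cos (angle u w) +
      Real.sin (angle u v) * Real.sin (angle u w) * Real.cos (angle Pv Pw) := by
  have huu : ⟪u, u⟫ = (1:ℝ) := by
    rw [real_inner_self_eq_norm_sq, hu]; norm_num
  have hPv0 : Pv ≠ 0 := by
    intro h
    exact hvu ⟪v, u⟫ (by rwa [hPv, sub_eq_zero] at h)
  have hPw0 : Pw ≠ 0 := by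
    intro h
    exact hwu ⟪w, u⟫ (by rwa [hPw, sub_eq_zero] at h)
  have hPvsq : ‖Pv‖ ^ 2 = 1 - ⟪u, v⟫ ^ 2 := by
    rw [← real_inner_self_eq_norm_sq, hPv]
    simp only [inner_sub_left, inner_sub_right, real_inner_smul_left, real_inner_smul_right,
      huu, real_inner_self_eq_norm_sq, hv, real_inner_comm v u, norm_smul, Real.norm_eq_abs,
      hu, mul_one, sq_abs]
    ring
  have hPwsq : ‖Pw‖ ^ 2 = 1 - ⟪u, w⟫ ^ 2 := by
    rw [← real_inner_self_eq_norm_sq, hPw]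
    simp only [inner_sub_left, inner_sub_right, real_inner_smul_left, real_inner_smul_right,
      huu, real_inner_self_eq_norm_sq, hw, real_inner_comm w u, norm_smul, Real.norm_eq_abs,
      hu, mul_one, sq_abs]
    ring
  have hcuv : Real.cos (angle u v) = ⟪u, v⟫ := by
    rw [cos_angle, hu, hv]; ring_nf
  have hcuw : Real.cos (angle u w) = ⟪u, w⟫ := by
    rw [cos_angle, hu, hw]; ring_nf
  have hsuv : Real.sin (angle u v) = ‖Pv‖ := by
    rw [Real.sin_eq_sqrt_one_sub_cos_sq (angle_nonneg _ _) (angle_le_pi _ _), hcuv, ← hPvsq,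
      Real.sqrt_sq (norm_nonneg _)]
  have hsuw : Real.sin (angle u w) = ‖Pw‖ := by
    rw [Real.sin_eq_sqrt_one_sub_cos_sq (angle_nonneg _ _) (angle_le_pi _ _), hcuw, ← hPwsq,
      Real.sqrt_sq (norm_nonneg _)]
  have hinner : ⟪Pv, Pw⟫ = ⟪v, w⟫ - ⟪u, v⟫ * ⟪u, w⟫ := by
    rw [hPv, hPw]
    simp only [inner_sub_left, inner_sub_right, real_inner_smul_left, real_inner_smul_right,
      huu, real_inner_comm v u, real_inner_comm w u]
    ring
  have hcvw : Real.cos (angle v w) = ⟪v, w⟫ := by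
    rw [cos_angle, hv, hw]; ring_nf
  rw [hcvw, hcuv, hcuw, hsuv, hsuw, cos_angle, hinner]
  have h1 : ‖Pv‖ ≠ 0 := norm_ne_zero_iff.mpr hPv0
  have h2 : ‖Pw‖ ≠ 0 := norm_ne_zero_iff.mpr hPw0
  field_simp
  ring
end
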